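/- Let (Ω, 𝓕, P) be a probability space, Z : Ω → ℝ a measurable random variable, σ > 0, m ∈ ℝ, and ξ : Ω → ℝ a random variable with law gaussianReal 0 σ² that is independent of Z. Set Y := m·Z + ξ. Then the conditional distribution of Y given Z is almost everywhere the Gaussian measure with mean m·z and variance σ²; that is, condDistrib Y Z P agrees (for Law(Z)-almost every z) with the kernel z ↦ gaussianReal (m·z) σ². -/

import Mathlib

open MeasureTheory ProbabilityTheory

/-- The Gaussian transfer kernel `z ↦ gaussianReal (m·z) σ²` as a Markov kernel. -/
noncomputable def gaussKer (m : ℝ) (σ : NNReal) : ProbabilityTheory.Kernel ℝ ℝ :=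
  ProbabilityTheory.Kernel.map
    ((ProbabilityTheory.Kernel.deterministic (fun z : ℝ => m * z) (measurable_const_mul m)) ×ₖ
      (ProbabilityTheory.Kernel.const ℝ (gaussianReal 0 (σ ^ 2))))
    (fun p : ℝ × ℝ => p.1 + p.2)

lemma gaussKer_apply (m : ℝ) (σ : NNReal) (z : ℝ) :
    gaussKer m σ z = gaussianReal (m * z) (σ ^ 2) := by
  rw [gaussKer, ProbabilityTheory.Kernel.map_apply _ (by fun_prop),
    ProbabilityTheory.Kernel.prod_apply, ProbabilityTheory.Kernel.deterministic_apply,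
    ProbabilityTheory.Kernel.const_apply, MeasureTheory.Measure.dirac_prod,
    Measure.map_map (by fun_prop) (by fun_prop)]
  have : ((fun p : ℝ × ℝ => p.1 + p.2) ∘ fun b : ℝ => ((m * z : ℝ), b))
      = (fun b : ℝ => m * z + b) := rfl
  rw [this, gaussianReal_map_const_add, zero_add]

instance (m : ℝ) (σ : NNReal) : IsMarkovKernel (gaussKer m σ) := by
  constructor
  intro z
  rw [gaussKer_apply]
  infer_instance

/-- If `ξ` has law `gaussianReal 0 σ²`, is independent of `Z`, and `Y = m·Z + ξ`, then the
conditional distribution of `Y` given `Z` is a.e. the kernel `z ↦ gaussianReal (m·z) σ²`. -/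
theorem stmt_9 {Ω : Type*} [MeasurableSpace Ω] (P : Measure Ω) [IsProbabilityMeasure P]
    (Z : Ω → ℝ) (hZ : Measurable Z) (σ : NNReal) (hσ : 0 < σ) (m : ℝ)
    (ξ : Ω → ℝ) (hξm : Measurable ξ)
    (hξ : Measure.map ξ P = gaussianReal 0 (σ^2))
    (hindep : IndepFun ξ Z P)
    (Y : Ω → ℝ) (hY : ∀ ω, Y ω = m * Z ω + ξ ω) :
    ∀ᵐ z ∂(Measure.map Z P), condDistrib Y Z P z = gaussianReal (m * z) (σ^2) := by
  have hYm : Measurable Y := by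
    have : Y = fun ω => m * Z ω + ξ ω := funext hY
    rw [this]; fun_prop
  have hpair : Measure.map (fun ω => (Z ω, ξ ω)) P
      = (Measure.map Z P).prod (gaussianReal 0 (σ ^ 2)) := by
    rw [← hξ]
    exact (indepFun_iff_map_prod_eq_prod_map_map hZ.aemeasurable hξm.aemeasurable).mp hindep.symm
  have hcomp : Measure.map (fun x => (Z x, Y x)) P
      = (Measure.map Z P) ⊗ₘ (gaussKer m σ) := by
    have h1 : Measure.map (fun x => (Z x, Y x)) P
        = Measure.map (fun p : ℝ × ℝ => (p.1, m * p.1 + p.2))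
            (Measure.map (fun ω => (Z ω, ξ ω)) P) := by
      rw [Measure.map_map (by fun_prop) (by fun_prop)]
      congr 1
      funext ω
      simp [hY ω]
    rw [h1, hpair]
    ext s hs
    rw [Measure.map_apply (by fun_prop) hs,
      Measure.prod_apply ((by fun_prop : Measurable fun p : ℝ × ℝ => (p.1, m * p.1 + p.2)) hs),
      Measure.compProd_apply hs]
    refine lintegral_congr fun z => ?_
    have hg : gaussianReal (m * z) (σ ^ 2)
        = (gaussianReal 0 (σ ^ 2)).map (fun x => m * z + x) := by
      rw [gaussianReal_map_const_add, zero_add]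
    rw [gaussKer_apply, hg, Measure.map_apply (by fun_prop) (measurable_prodMk_left hs)]
    rfl
  have h := condDistrib_ae_eq_of_measure_eq_compProd_of_measurable hZ hYm (κ := gaussKer m σ) hcomp
  filter_upwards [h] with z hz
  rw [hz, gaussKer_apply]
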